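/- There exists a family of maps (M_q)_{q≥1}, M_q : ℝ → ℝ^{d×d}, such that: (i) each M_q belongs to L^∞_loc(ℝ, ℝ^{d×d}); (ii) M_q(t) = 0 whenever t ∉ (σ_q − η_M, σ_q]; (iii) for every p ∈ [1,∞] and every φ ∈ L^p([−η_M,0],ℝ^d), the unique solution z of the difference-delay system z(t) = Σ_{i=1}^M D_i(t) z(t−η_i) with initial condition φ satisfies z(t) = Σ_{q=1}^∞ M_q(t) φ(t − σ_q) for a.e. t ≥ 0, where for each t ≥ 0 all but the finitely many terms with σ_q ≤ t + η_M vanish (so the sum is finite and does not depend on values of φ outside [−η_M,0]). -/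

import Mathlib

open MeasureTheory Matrix Filter Set
open scoped ENNReal

/-- Euclidean norm of a vector in `ℝ^ι`. -/
noncomputable def euclNorm {ι : Type*} [Fintype ι] (x : ι → ℝ) : ℝ :=
  Real.sqrt (∑ j, (x j) ^ 2)

/-- `z` belongs to `L^p_loc([-ηM, ∞), ℝ^d)` and satisfies the time-varying difference-delay
system `z(t) = ∑ i, D i (t) * z (t - η i)` for a.e. `t ≥ 0` (`ηM` is the largest delay;
the values of `z` on `[-ηM, 0]` are its initial condition). -/
def DelaySol (d M : ℕ) (η : Fin M → ℝ) (D : Fin M → ℝ → Matrix (Fin d) (Fin d) ℝ)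
    (ηM : ℝ) (p : ℝ≥0∞) (z : ℝ → Fin d → ℝ) : Prop :=
  (∀ b : ℝ, MemLp z p (volume.restrict (Set.Icc (-ηM) b))) ∧
  (∀ᵐ t ∂(volume.restrict (Set.Ici (0 : ℝ))), z t = ∑ i, (D i t).mulVec (z (t - η i)))

/-- `L^p` exponential stability of the difference-delay system. -/
def DelayLpStable (d M : ℕ) (η : Fin M → ℝ) (D : Fin M → ℝ → Matrix (Fin d) (Fin d) ℝ)
    (ηM : ℝ) (p : ℝ≥0∞) : Prop :=
  ∃ C > (0 : ℝ), ∃ γ > (0 : ℝ), ∀ z, DelaySol d M η D ηM p z → ∀ t ≥ (0 : ℝ),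
    eLpNorm (fun θ => euclNorm (z (t + θ))) p (volume.restrict (Set.Icc (-ηM) 0)) ≤
      ENNReal.ofReal (C * Real.exp (-γ * t)) *
        eLpNorm (fun θ => euclNorm (z θ)) p (volume.restrict (Set.Icc (-ηM) 0))

/-- `C⁰` exponential stability of the difference-delay system: continuous solutions
(the equation holding for all `t ≥ 0` forces the compatibility condition at `t = 0`). -/
def DelayC0Stable (d M : ℕ) (η : Fin M → ℝ) (D : Fin M → ℝ → Matrix (Fin d) (Fin d) ℝ)
    (ηM : ℝ) : Prop :=
  ∃ C > (0 : ℝ), ∃ γ > (0 : ℝ), ∀ z : ℝ → Fin d → ℝ,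
    ContinuousOn z (Set.Ici (-ηM)) →
    (∀ t ≥ (0 : ℝ), z t = ∑ i, (D i t).mulVec (z (t - η i))) →
    ∀ t ≥ (0 : ℝ), ∀ θ ∈ Set.Icc (-ηM) (0 : ℝ),
      euclNorm (z (t + θ)) ≤ C * Real.exp (-γ * t) *
        ⨆ θ' : Set.Icc (-ηM) (0 : ℝ), euclNorm (z (θ' : ℝ))

open scoped Classical

namespace DelayRep

variable {d M : ℕ}

/-- total delay of a word -/
def wsum (η : Fin M → ℝ) : List (Fin M) → ℝ
  | [] => 0
  | i :: w => η i + wsum η w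

/-- `comp η w t` : the word `w` is "complete" at time `t`. -/
def comp (η : Fin M → ℝ) : List (Fin M) → ℝ → Prop
  | [], t => t < 0
  | i :: w, t => 0 ≤ t ∧ comp η w (t - η i)

/-- iterated product of the matrices `D` along a word, with time shifts. -/
noncomputable def wprod (η : Fin M → ℝ) (D : Fin M → ℝ → Matrix (Fin d) (Fin d) ℝ) :
    List (Fin M) → ℝ → Matrix (Fin d) (Fin d) ℝ
  | [], _ => 1
  | i :: w, t => D i t * wprod η D w (t - η i)

lemma wsum_nil (η : Fin M → ℝ) : wsum η [] = 0 := rfl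
lemma wsum_cons (η : Fin M → ℝ) (i : Fin M) (w : List (Fin M)) :
    wsum η (i :: w) = η i + wsum η w := rfl

lemma wsum_count (η : Fin M → ℝ) (w : List (Fin M)) :
    wsum η w = ∑ i : Fin M, (w.count i : ℝ) * η i := by
  induction w with
  | nil => simp [wsum]
  | cons i w ih =>
    have h : ∀ j : Fin M, (((i :: w).count j : ℕ) : ℝ) * η j
        = (w.count j : ℝ) * η j + (if j = i then η j else 0) := by
      intro j
      rcases eq_or_ne j i with hji | hji
      · subst hji; simp [List.count_cons]; ring
      · simp [List.count_cons, hji, Ne.symm hji]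
    rw [wsum_cons, ih, Finset.sum_congr rfl fun j _ => h j, Finset.sum_add_distrib,
      Finset.sum_ite_eq' Finset.univ i η]
    simp [add_comm]

lemma length_mul_le_wsum {η : Fin M → ℝ} {c : ℝ} (hc : ∀ i, c ≤ η i) (w : List (Fin M)) :
    (w.length : ℝ) * c ≤ wsum η w := by
  induction w with
  | nil => simp [wsum]
  | cons i w ih =>
    have := hc i
    simp only [List.length_cons, wsum_cons]
    push_cast
    nlinarith

lemma comp_lt {η : Fin M → ℝ} : ∀ {w : List (Fin M)} {t : ℝ}, comp η w t → t < wsum η w := by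
  intro w
  induction w with
  | nil => intro t ht; simpa [wsum, comp] using ht
  | cons i w ih =>
    intro t ht
    have := ih ht.2
    rw [wsum_cons]; linarith

lemma comp_len_le {η : Fin M → ℝ} {c : ℝ} (hc0 : 0 < c) (hc : ∀ i, c ≤ η i) :
    ∀ (w : List (Fin M)) (n : ℕ) (t : ℝ), comp η w t → t < n * c → w.length ≤ n := by
  intro w
  induction w with
  | nil => intro n t _ _; simp
  | cons i w ih =>
    intro n t ht htn
    obtain ⟨ht0, htc⟩ := ht
    cases n with
    | zero => exfalso; simp at htn; linarith
    | succ m =>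
      have hi := hc i
      have : t - η i < m * c := by push_cast at htn ⊢; linarith
      have := ih m (t - η i) htc this
      simp only [List.length_cons]
      omega

lemma comp_wsum_le {η : Fin M → ℝ} {ηM : ℝ} (hηM : ∀ i, η i ≤ ηM) (hηM0 : 0 ≤ ηM) :
    ∀ (w : List (Fin M)) (t : ℝ), comp η w t → 0 ≤ t → wsum η w ≤ t + ηM := by
  intro w
  induction w with
  | nil => intro t _ ht0; simp [wsum]; linarith
  | cons i w ih =>
    intro t ht ht0
    obtain ⟨_, htc⟩ := ht
    rw [wsum_cons]
    cases w with
    | nil =>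
      have := hηM i
      simp [wsum]; linarith
    | cons j v =>
      have h0 : 0 ≤ t - η i := htc.1
      have := ih (t - η i) htc h0
      linarith

lemma compMeasurable (η : Fin M → ℝ) : ∀ w : List (Fin M), MeasurableSet {t : ℝ | comp η w t} := by
  intro w
  induction w with
  | nil =>
    have : {t : ℝ | comp η [] t} = Iio 0 := by ext t; simp [comp]
    rw [this]; exact measurableSet_Iio
  | cons i w ih =>
    have : {t : ℝ | comp η (i :: w) t}
        = Ici (0:ℝ) ∩ (fun t => t - η i) ⁻¹' {t : ℝ | comp η w t} := by
      ext t; simp [comp]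
    rw [this]
    exact measurableSet_Ici.inter (ih.preimage (measurable_id.sub_const _))

lemma wprodMeasurable (η : Fin M → ℝ) (D : Fin M → ℝ → Matrix (Fin d) (Fin d) ℝ)
    (hD : ∀ i k l, Measurable fun t => D i t k l) :
    ∀ (w : List (Fin M)) (k l : Fin d), Measurable fun t => wprod η D w t k l := by
  intro w
  induction w with
  | nil => intro k l; simp only [wprod]; exact measurable_const
  | cons i w ih =>
    intro k l
    simp only [wprod, Matrix.mul_apply]
    exact Finset.measurable_sum _ fun m _ =>
      (hD i k m).mul ((ih m l).comp (measurable_id.sub_const _))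

lemma sum_length_le_succ {α : Type*} [Fintype α] [DecidableEq α] {β : Type*} [AddCommMonoid β]
    (n : ℕ) (g : List α → β) (h0 : g [] = 0) :
    ∑ w ∈ (List.finite_length_le α (n+1)).toFinset, g w
      = ∑ i : α, ∑ w ∈ (List.finite_length_le α n).toFinset, g (i :: w) := by
  have hne : ([] : List α) ∉ (Finset.univ ×ˢ (List.finite_length_le α n).toFinset).image
      (fun p : α × List α => p.1 :: p.2) := by
    simp
  have himg : (List.finite_length_le α (n+1)).toFinset
      = insert ([] : List α) ((Finset.univ ×ˢ (List.finite_length_le α n).toFinset).image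
          (fun p : α × List α => p.1 :: p.2)) := by
    ext w
    cases w with
    | nil => simp [Set.Finite.mem_toFinset]
    | cons i v =>
      simp [Set.Finite.mem_toFinset, Finset.mem_image, Nat.succ_le_succ_iff]
  rw [himg, Finset.sum_insert hne, h0, zero_add, Finset.sum_image, Finset.sum_product]
  intro p _ q _ h
  simp only [List.cons.injEq] at h
  exact Prod.ext h.1 h.2

lemma sum_mulVec' {ι : Type*} (s : Finset ι) (f : ι → Matrix (Fin d) (Fin d) ℝ) (v : Fin d → ℝ) :
    (∑ w ∈ s, f w).mulVec v = ∑ w ∈ s, (f w).mulVec v := by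
  ext k
  simp [Matrix.mulVec, dotProduct, Matrix.sum_apply, Finset.sum_mul]
  rw [Finset.sum_comm]

lemma mulVec_sum' {ι : Type*} (s : Finset ι) (A : Matrix (Fin d) (Fin d) ℝ) (f : ι → Fin d → ℝ) :
    A.mulVec (∑ w ∈ s, f w) = ∑ w ∈ s, A.mulVec (f w) := by
  show A.mulVecLin (∑ w ∈ s, f w) = _
  rw [map_sum]
  rfl

end DelayRep

open DelayRep in
set_option maxHeartbeats 2000000 in
/-- There is a family `(Mq q)_{q ∈ ℕ}` of matrix-valued maps such that:
(i) each `Mq q` is in `L^∞_loc(ℝ, ℝ^{d×d})`; (ii) `Mq q t = 0` for `t ∉ (σ q − ηM, σ q]`;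
(iii) for every `p ∈ [1,∞]` and every `φ ∈ L^p([−ηM,0], ℝ^d)`, the solution `z` of the
difference-delay system with initial condition `φ` satisfies
`z t = ∑ᶠ q, Mq q t *ᵥ φ (t − σ q)` for a.e. `t ≥ 0`, the sum having finite support.
Here `σ` is the increasing enumeration (starting at `σ 0 = 0`) of the additive semigroup
generated by the delays. -/
theorem delay_solution_representation
    (d M : ℕ) (hd : 1 ≤ d) (hM : 1 ≤ M)
    (η : Fin M → ℝ) (hηpos : ∀ i, 0 < η i) (hηmono : Monotone η)
    (D : Fin M → ℝ → Matrix (Fin d) (Fin d) ℝ)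
    (hDmeas : ∀ i k l, Measurable fun t => D i t k l)
    (hDbdd : ∀ i, ∃ B : ℝ, ∀ᵐ t ∂(volume.restrict (Set.Ici (0 : ℝ))), ∀ k l, |D i t k l| ≤ B)
    (ηM : ℝ) (hηM : ηM = η ⟨M - 1, by omega⟩)
    (σ : ℕ → ℝ) (hσ0 : σ 0 = 0) (hσmono : StrictMono σ)
    (hσrange : Set.range σ = {s : ℝ | ∃ q : Fin M → ℕ, s = ∑ i, (q i : ℝ) * η i}) :
    ∃ Mq : ℕ → ℝ → Matrix (Fin d) (Fin d) ℝ,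
      -- (i) each `Mq q` belongs to `L^∞_loc(ℝ, ℝ^{d×d})`
      (∀ q, (∀ k l, Measurable fun t => Mq q t k l) ∧
        ∀ r : ℝ, ∃ B : ℝ, ∀ᵐ t ∂(volume.restrict (Set.Icc (-r) r)), ∀ k l, |Mq q t k l| ≤ B) ∧
      -- (ii) support condition
      (∀ q t, t ∉ Set.Ioc (σ q - ηM) (σ q) → Mq q t = 0) ∧
      -- the sum below is finite at each time
      (∀ t : ℝ, {q : ℕ | Mq q t ≠ 0}.Finite) ∧
      -- (iii) representation formula for all solutions
      (∀ p : ℝ≥0∞, 1 ≤ p → ∀ φ : ℝ → Fin d → ℝ,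
        MemLp φ p (volume.restrict (Set.Icc (-ηM) 0)) →
        ∀ z, DelaySol d M η D ηM p z → z =ᵐ[volume.restrict (Set.Icc (-ηM) 0)] φ →
        ∀ᵐ t ∂(volume.restrict (Set.Ici (0 : ℝ))),
          z t = ∑ᶠ q : ℕ, (Mq q t).mulVec (φ (t - σ q))) := by
  classical
  set c := η ⟨0, by omega⟩ with hc_def
  have hc : 0 < c := hηpos _
  have hcle : ∀ i, c ≤ η i := fun i => hηmono (by simp [Fin.le_def])
  have hiM : ∀ i : Fin M, η i ≤ ηM := by
    intro i
    rw [hηM]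
    exact hηmono (by simp [Fin.le_def]; omega)
  have hηM0 : 0 < ηM := by rw [hηM]; exact hηpos _
  have hσinj : Function.Injective σ := hσmono.injective
  have hwmem : ∀ w : List (Fin M), ∃ q : ℕ, σ q = wsum η w := by
    intro w
    have h1 : wsum η w ∈ Set.range σ := by
      rw [hσrange]
      exact ⟨fun i => w.count i, wsum_count η w⟩
    exact h1
  choose qof hqof using hwmem
  have hσfin : ∀ T : ℝ, {q : ℕ | σ q ≤ T}.Finite := by
    intro T
    have hfin : ({qv : Fin M → ℕ | ∀ i, qv i ≤ ⌈T / c⌉₊}).Finite := by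
      have hsub : {qv : Fin M → ℕ | ∀ i, qv i ≤ ⌈T / c⌉₊} ⊆
          Set.pi Set.univ (fun _ : Fin M => Set.Iic ⌈T / c⌉₊) := by
        intro qv h i _; exact h i
      exact (Set.Finite.pi fun _ => Set.finite_Iic _).subset hsub
    have h1 : ({s : ℝ | ∃ qv : Fin M → ℕ, s = ∑ i, (qv i : ℝ) * η i} ∩ Set.Iic T).Finite := by
      have hsub : {s : ℝ | ∃ qv : Fin M → ℕ, s = ∑ i, (qv i : ℝ) * η i} ∩ Set.Iic T ⊆
          (fun qv : Fin M → ℕ => ∑ i, (qv i : ℝ) * η i) '' {qv | ∀ i, qv i ≤ ⌈T / c⌉₊} := by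
        rintro s ⟨⟨qv, rfl⟩, hsT⟩
        refine ⟨qv, fun i => ?_, rfl⟩
        have hterm : (qv i : ℝ) * c ≤ ∑ j, (qv j : ℝ) * η j := by
          have h2 : (qv i : ℝ) * c ≤ (qv i : ℝ) * η i :=
            mul_le_mul_of_nonneg_left (hcle i) (Nat.cast_nonneg _)
          refine h2.trans (Finset.single_le_sum (f := fun j => (qv j : ℝ) * η j) (fun j _ => ?_) (Finset.mem_univ i))
          exact mul_nonneg (Nat.cast_nonneg _) (hηpos j).le
        have h3 : (qv i : ℝ) ≤ T / c := by
          rw [le_div_iff₀ hc]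
          exact hterm.trans hsT
        have h4 : (qv i : ℝ) ≤ (⌈T / c⌉₊ : ℝ) := h3.trans (Nat.le_ceil _)
        exact_mod_cast h4
      exact (hfin.image _).subset hsub
    have hsub2 : {q : ℕ | σ q ≤ T} ⊆ σ ⁻¹'
        ({s : ℝ | ∃ qv : Fin M → ℕ, s = ∑ i, (qv i : ℝ) * η i} ∩ Set.Iic T) := by
      intro q hq
      refine ⟨?_, hq⟩
      have : σ q ∈ Set.range σ := ⟨q, rfl⟩
      rwa [hσrange] at this
    exact (h1.preimage hσinj.injOn).subset hsub2
  set Nq : ℕ → ℕ := fun q => ⌈σ q / c⌉₊ with hNq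
  set Wq : ℕ → Finset (List (Fin M)) :=
    fun q => ((List.finite_length_le (Fin M) (Nq q)).toFinset).filter
      (fun w => wsum η w = σ q) with hWqdef
  have hWq_mem : ∀ q w, w ∈ Wq q ↔ w.length ≤ Nq q ∧ wsum η w = σ q := by
    intro q w
    simp [hWqdef, Set.Finite.mem_toFinset]
  have hlen_Nq : ∀ q (w : List (Fin M)), wsum η w = σ q → w.length ≤ Nq q := by
    intro q w hw
    have h1 : (w.length : ℝ) * c ≤ σ q := hw ▸ length_mul_le_wsum hcle w
    have h2 : (w.length : ℝ) ≤ σ q / c := (le_div_iff₀ hc).2 h1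
    have h3 := h2.trans (Nat.le_ceil _)
    exact_mod_cast h3
  set Mq : ℕ → ℝ → Matrix (Fin d) (Fin d) ℝ := fun q t =>
    if t ∈ Set.Ioc (σ q - ηM) (σ q) then
      ∑ w ∈ Wq q, (if comp η w t then wprod η D w t else 0) else 0 with hMqdef
  -- bounds for D
  choose B hB using hDbdd
  set BB : ℝ := 1 + ∑ i, |B i| with hBBdef
  have hBB1 : 1 ≤ BB := by
    rw [hBBdef]
    have : (0:ℝ) ≤ ∑ i, |B i| := Finset.sum_nonneg fun i _ => abs_nonneg _
    linarith
  have hBBi : ∀ i, B i ≤ BB := by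
    intro i
    have h1 : |B i| ≤ ∑ j, |B j| :=
      Finset.single_le_sum (f := fun j => |B j|) (fun j _ => abs_nonneg _) (Finset.mem_univ i)
    have h2 := le_abs_self (B i)
    rw [hBBdef]; linarith
  set S₀ : Set ℝ := {t | 0 ≤ t ∧ ¬ ∀ i k l, |D i t k l| ≤ BB} with hS₀def
  have hS₀null : volume S₀ = 0 := by
    have hsub : S₀ ⊆ ⋃ i, ({t | ¬ ∀ k l, |D i t k l| ≤ B i} ∩ Set.Ici 0) := by
      rintro t ⟨ht0, ht⟩
      push_neg at ht
      obtain ⟨i, k, l, h⟩ := ht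
      refine Set.mem_iUnion.2 ⟨i, ⟨fun hall => ?_, ht0⟩⟩
      exact absurd ((hall k l).trans (hBBi i)) (not_le.mpr h)
    refine measure_mono_null hsub (measure_iUnion_null fun i => ?_)
    have h1 := hB i
    rw [ae_iff] at h1
    rwa [Measure.restrict_apply' measurableSet_Ici] at h1
  have htrans : ∀ (A : Set ℝ), volume A = 0 → ∀ a : ℝ,
      volume ((fun t => t - a) ⁻¹' A) = 0 := by
    intro A hA a
    have h1 : (fun t : ℝ => t - a) = fun t => t + (-a) := by funext t; ring
    rw [h1, measure_preimage_add_right volume (-a) A]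
    exact hA
  have hUnull : ∀ (A : Set ℝ), volume A = 0 →
      volume {t : ℝ | ∃ w : List (Fin M), t - wsum η w ∈ A} = 0 := by
    intro A hA
    have h1 : {t : ℝ | ∃ w : List (Fin M), t - wsum η w ∈ A}
        = ⋃ w : List (Fin M), (fun t => t - wsum η w) ⁻¹' A := by
      ext t; simp
    rw [h1]
    exact measure_iUnion_null fun w => htrans A hA _
  have hdBB1 : (1:ℝ) ≤ d * BB := by
    have h1 : (1:ℝ) ≤ (d:ℝ) := by exact_mod_cast hd
    nlinarith
  have hwb : ∀ (w : List (Fin M)) (t : ℝ), comp η w t →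
      (∀ v : List (Fin M), t - wsum η v ∉ S₀) →
      ∀ k l, |wprod η D w t k l| ≤ (d * BB) ^ w.length := by
    intro w
    induction w with
    | nil =>
      intro t _ _ k l
      simp only [wprod, List.length_nil, pow_zero, Matrix.one_apply]
      split_ifs <;> simp
    | cons i w ih =>
      intro t hcomp hgood k l
      have ht0 : (0:ℝ) ≤ t := hcomp.1
      have htS : t ∉ S₀ := by
        have h1 := hgood []
        rwa [wsum_nil, sub_zero] at h1
      have hD : ∀ j k' l', |D j t k' l'| ≤ BB := by
        by_contra h
        exact htS ⟨ht0, h⟩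
      have hgood' : ∀ v, (t - η i) - wsum η v ∉ S₀ := fun v => by
        have h1 := hgood (i :: v)
        rwa [wsum_cons, ← sub_sub] at h1
      have hrec := ih (t - η i) hcomp.2 hgood'
      simp only [wprod, Matrix.mul_apply, List.length_cons]
      calc |∑ m, D i t k m * wprod η D w (t - η i) m l|
          ≤ ∑ m, |D i t k m * wprod η D w (t - η i) m l| := Finset.abs_sum_le_sum_abs _ _
        _ ≤ ∑ _m : Fin d, BB * (d * BB) ^ w.length := by
            refine Finset.sum_le_sum fun m _ => ?_
            rw [abs_mul]
            exact mul_le_mul (hD i k m) (hrec m l) (abs_nonneg _) (by linarith)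
        _ = (d * BB) ^ (w.length + 1) := by
            rw [Finset.sum_const, Finset.card_univ, Fintype.card_fin, nsmul_eq_mul, pow_succ]
            ring
  have hMqb : ∀ q, ∀ t : ℝ, (∀ v : List (Fin M), t - wsum η v ∉ S₀) →
      ∀ k l, |Mq q t k l| ≤ (Wq q).card * (d * BB) ^ (Nq q) := by
    intro q t hgood k l
    have hBq0 : (0:ℝ) ≤ (Wq q).card * (d * BB) ^ (Nq q) :=
      mul_nonneg (Nat.cast_nonneg _) (pow_nonneg (by linarith) _)
    simp only [hMqdef]
    split_ifs with hio
    · rw [Matrix.sum_apply]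
      calc |∑ w ∈ Wq q, (if comp η w t then wprod η D w t else 0) k l|
          ≤ ∑ w ∈ Wq q, |(if comp η w t then wprod η D w t else 0) k l| :=
            Finset.abs_sum_le_sum_abs _ _
        _ ≤ ∑ _w ∈ Wq q, (d * BB) ^ (Nq q) := by
            refine Finset.sum_le_sum fun w hw => ?_
            rw [apply_ite (fun A : Matrix (Fin d) (Fin d) ℝ => A k l)]
            split_ifs with hcw
            · refine (hwb w t hcw hgood k l).trans ?_
              exact pow_le_pow_right₀ hdBB1 ((hWq_mem q w).1 hw).1
            · simp only [Matrix.zero_apply, abs_zero]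
              exact pow_nonneg (by linarith) _
        _ = (Wq q).card * (d * BB) ^ (Nq q) := by
            rw [Finset.sum_const, nsmul_eq_mul]
    · simpa using hBq0
  refine ⟨Mq, ?_, ?_, ?_, ?_⟩
  · -- (i)
    intro q
    constructor
    · intro k l
      have hfun : (fun t => Mq q t k l) = fun t =>
          if t ∈ Set.Ioc (σ q - ηM) (σ q) then
            (∑ w ∈ Wq q, if comp η w t then wprod η D w t k l else 0) else 0 := by
        funext t
        simp only [hMqdef]
        split_ifs with h
        · rw [Matrix.sum_apply]
          refine Finset.sum_congr rfl fun w _ => ?_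
          rw [apply_ite (fun A : Matrix (Fin d) (Fin d) ℝ => A k l)]
          simp
        · simp
      rw [hfun]
      refine Measurable.ite measurableSet_Ioc ?_ measurable_const
      exact Finset.measurable_sum _ fun w _ =>
        Measurable.ite (compMeasurable η w) (wprodMeasurable η D hDmeas w k l) measurable_const
    · intro r
      refine ⟨(Wq q).card * (d * BB) ^ (Nq q), ?_⟩
      refine ae_restrict_of_ae ?_
      rw [ae_iff]
      refine measure_mono_null ?_ (hUnull S₀ hS₀null)
      intro t ht
      simp only [Set.mem_setOf_eq] at ht ⊢
      by_contra hmem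
      push_neg at hmem
      exact ht (hMqb q t hmem)
  · -- (ii)
    intro q t ht
    simp only [hMqdef]
    rw [if_neg ht]
  · -- finiteness
    intro t
    refine (hσfin (t + ηM)).subset ?_
    intro q hq
    simp only [Set.mem_setOf_eq] at hq ⊢
    by_contra h
    push_neg at h
    apply hq
    simp only [hMqdef]
    rw [if_neg]
    rintro ⟨h1, _⟩
    linarith
  · -- (iii) representation
    intro p hp φ hφ z hz hzφ
    set A₁ : Set ℝ := {t | ¬ z t = ∑ i, (D i t).mulVec (z (t - η i))} ∩ Set.Ici 0 with hA₁def
    have hA₁null : volume A₁ = 0 := by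
      have h1 := hz.2
      rw [ae_iff] at h1
      rwa [Measure.restrict_apply' measurableSet_Ici] at h1
    set A₂ : Set ℝ := {t | ¬ z t = φ t} ∩ Set.Icc (-ηM) 0 with hA₂def
    have hA₂null : volume A₂ = 0 := by
      have h1 := hzφ
      rw [EventuallyEq, ae_iff] at h1
      rwa [Measure.restrict_apply' measurableSet_Icc] at h1
    set A₃ : Set ℝ := Set.range (fun q : ℕ => σ q - ηM) with hA₃def
    have hA₃null : volume A₃ = 0 := (Set.countable_range _).measure_zero _
    set S : Set ℝ := A₁ ∪ A₂ ∪ A₃ with hSdef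
    have hSnull : volume S = 0 :=
      measure_union_null (measure_union_null hA₁null hA₂null) hA₃null
    have main : ∀ n : ℕ, ∀ t : ℝ, t < n * c → (∀ w : List (Fin M), t - wsum η w ∉ S) →
        0 ≤ t → z t = ∑ w ∈ (List.finite_length_le (Fin M) n).toFinset,
          (if comp η w t then (wprod η D w t).mulVec (φ (t - wsum η w)) else 0) := by
      intro n
      induction n with
      | zero =>
        intro t ht _ ht0
        exfalso
        rw [Nat.cast_zero, zero_mul] at ht
        linarith
      | succ n ih =>
        intro t ht hG ht0
        have htS : t ∉ S := by
          have h1 := hG []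
          rwa [wsum_nil, sub_zero] at h1
        have heqt : z t = ∑ i, (D i t).mulVec (z (t - η i)) := by
          by_contra h
          exact htS (Or.inl (Or.inl ⟨h, ht0⟩))
        have hsub : ∀ i : Fin M,
            z (t - η i) = ∑ w ∈ (List.finite_length_le (Fin M) n).toFinset,
              (if comp η w (t - η i) then
                (wprod η D w (t - η i)).mulVec (φ ((t - η i) - wsum η w)) else 0) := by
          intro i
          have hGi : ∀ w : List (Fin M), (t - η i) - wsum η w ∉ S := fun w => by
            have h1 := hG (i :: w)
            rwa [wsum_cons, ← sub_sub] at h1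
          by_cases hneg : t - η i < 0
          · have hmem : t - η i ∈ Set.Icc (-ηM) (0:ℝ) := ⟨by linarith [hiM i], le_of_lt hneg⟩
            have hzφi : z (t - η i) = φ (t - η i) := by
              by_contra h
              have h0 := hGi []
              rw [wsum_nil, sub_zero] at h0
              exact h0 (Or.inl (Or.inr ⟨h, hmem⟩))
            rw [hzφi, Finset.sum_eq_single ([] : List (Fin M))]
            · rw [if_pos (show comp η ([] : List (Fin M)) (t - η i) from hneg), wsum_nil,
                sub_zero]
              show φ (t - η i) = (1 : Matrix (Fin d) (Fin d) ℝ).mulVec (φ (t - η i))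
              rw [Matrix.one_mulVec]
            · intro w _ hwne
              cases w with
              | nil => exact absurd rfl hwne
              | cons j v =>
                rw [if_neg]
                intro hcw
                exact absurd hcw.1 (not_le.mpr hneg)
            · intro hnot
              exact absurd (by simp [Set.Finite.mem_toFinset] :
                ([] : List (Fin M)) ∈ (List.finite_length_le (Fin M) n).toFinset) hnot
          · push_neg at hneg
            have hlt : t - η i < n * c := by
              have h1 := hcle i
              push_cast at ht
              linarith
            exact ih (t - η i) hlt hGi hneg
        rw [heqt]
        have gnil : (if comp η ([] : List (Fin M)) t then
            (wprod η D ([] : List (Fin M)) t).mulVec (φ (t - wsum η [])) else 0) = 0 :=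
          if_neg (not_lt.mpr ht0)
        rw [sum_length_le_succ n _ gnil]
        refine Finset.sum_congr rfl fun i _ => ?_
        rw [hsub i, mulVec_sum']
        refine Finset.sum_congr rfl fun w _ => ?_
        rw [apply_ite ((D i t).mulVec), Matrix.mulVec_zero]
        by_cases hcw : comp η w (t - η i)
        · rw [if_pos hcw, if_pos (show comp η (i :: w) t from ⟨ht0, hcw⟩)]
          show (D i t).mulVec ((wprod η D w (t - η i)).mulVec (φ (t - η i - wsum η w)))
            = (wprod η D (i :: w) t).mulVec (φ (t - wsum η (i :: w)))
          rw [Matrix.mulVec_mulVec, wsum_cons, ← sub_sub]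
          rfl
        · rw [if_neg hcw, if_neg (show ¬ comp η (i :: w) t from fun hcc => hcw hcc.2)]
    have final : ∀ t : ℝ, (∀ w : List (Fin M), t - wsum η w ∉ S) → 0 ≤ t →
        z t = ∑ᶠ q : ℕ, (Mq q t).mulVec (φ (t - σ q)) := by
      intro t hG ht0
      have htS : t ∉ S := by
        have h1 := hG []
        rwa [wsum_nil, sub_zero] at h1
      have htA₃ : ∀ q : ℕ, t ≠ σ q - ηM := by
        intro q h
        exact htS (Or.inr ⟨q, h.symm⟩)
      set n : ℕ := ⌈t / c⌉₊ + 1 with hn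
      have htn : t < n * c := by
        have h1 : t / c ≤ (⌈t / c⌉₊ : ℝ) := Nat.le_ceil _
        have h2 : t ≤ (⌈t / c⌉₊ : ℝ) * c := by
          rwa [div_le_iff₀ hc] at h1
        rw [hn]
        push_cast
        nlinarith
      have hrep := main n t htn hG ht0
      have hsupp : (Function.support fun q : ℕ => (Mq q t).mulVec (φ (t - σ q)))
          ⊆ ↑(hσfin (t + ηM)).toFinset := by
        intro q hq
        rw [Finset.mem_coe, Set.Finite.mem_toFinset]
        simp only [Function.mem_support] at hq
        simp only [Set.mem_setOf_eq]
        by_contra h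
        push_neg at h
        apply hq
        have hMq0 : Mq q t = 0 := by
          simp only [hMqdef]
          rw [if_neg]
          rintro ⟨h1, _⟩
          linarith
        rw [hMq0, Matrix.zero_mulVec]
      rw [finsum_eq_sum_of_support_subset _ hsupp, hrep]
      have hMq_eq : ∀ q : ℕ, (Mq q t).mulVec (φ (t - σ q))
          = ∑ w ∈ Wq q,
            (if comp η w t then (wprod η D w t).mulVec (φ (t - wsum η w)) else 0) := by
        intro q
        by_cases hio : t ∈ Set.Ioc (σ q - ηM) (σ q)
        · simp only [hMqdef]
          rw [if_pos hio, sum_mulVec']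
          refine Finset.sum_congr rfl fun w hw => ?_
          rw [apply_ite (fun A : Matrix (Fin d) (Fin d) ℝ => A.mulVec (φ (t - σ q))),
            Matrix.zero_mulVec]
          rw [← ((hWq_mem q w).1 hw).2]
        · simp only [hMqdef]
          rw [if_neg hio, Matrix.zero_mulVec]
          symm
          refine Finset.sum_eq_zero fun w hw => ?_
          rw [if_neg]
          intro hcw
          obtain ⟨_, hwsum⟩ := (hWq_mem q w).1 hw
          apply hio
          constructor
          · have h1 : wsum η w ≤ t + ηM := comp_wsum_le hiM hηM0.le w t hcw ht0
            rw [hwsum] at h1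
            rcases lt_or_eq_of_le (by linarith : σ q - ηM ≤ t) with h | h
            · exact h
            · exact absurd h.symm (htA₃ q)
          · have h2 := comp_lt hcw
            rw [hwsum] at h2
            exact h2.le
      rw [show (∑ q ∈ (hσfin (t + ηM)).toFinset, (Mq q t).mulVec (φ (t - σ q)))
          = ∑ q ∈ (hσfin (t + ηM)).toFinset, ∑ w ∈ Wq q,
              (if comp η w t then (wprod η D w t).mulVec (φ (t - wsum η w)) else 0)
        from Finset.sum_congr rfl fun q _ => hMq_eq q]
      have hfilter : ∑ w ∈ (List.finite_length_le (Fin M) n).toFinset,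
            (if comp η w t then (wprod η D w t).mulVec (φ (t - wsum η w)) else 0)
          = ∑ w ∈ (List.finite_length_le (Fin M) n).toFinset.filter (fun w => comp η w t),
            (if comp η w t then (wprod η D w t).mulVec (φ (t - wsum η w)) else 0) :=
        (Finset.sum_filter_of_ne fun w _ hne => by
          by_contra hcw
          exact hne (if_neg hcw)).symm
      have hmaps : ∀ w ∈ (List.finite_length_le (Fin M) n).toFinset.filter
          (fun w => comp η w t), qof w ∈ (hσfin (t + ηM)).toFinset := by
        intro w hw
        rw [Finset.mem_filter] at hw
        rw [Set.Finite.mem_toFinset]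
        show σ (qof w) ≤ t + ηM
        rw [hqof w]
        exact comp_wsum_le hiM hηM0.le w t hw.2 ht0
      rw [hfilter, ← Finset.sum_fiberwise_of_maps_to hmaps
        (fun w => if comp η w t then (wprod η D w t).mulVec (φ (t - wsum η w)) else 0)]
      refine Finset.sum_congr rfl fun q _ => ?_
      have hset : ((List.finite_length_le (Fin M) n).toFinset.filter
            (fun w => comp η w t)).filter (fun w => qof w = q)
          = (Wq q).filter (fun w => comp η w t) := by
        ext w
        simp only [Finset.mem_filter, Set.Finite.mem_toFinset, Set.mem_setOf_eq, hWq_mem]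
        constructor
        · rintro ⟨⟨_, hcw⟩, hqw⟩
          have hws : wsum η w = σ q := by rw [← hqof w, hqw]
          exact ⟨⟨hlen_Nq q w hws, hws⟩, hcw⟩
        · rintro ⟨⟨_, hws⟩, hcw⟩
          refine ⟨⟨comp_len_le hc hcle w n t hcw htn, hcw⟩, ?_⟩
          apply hσinj
          rw [hqof w, hws]
      rw [hset]
      exact Finset.sum_filter_of_ne fun w _ hne => by
        by_contra hcw
        exact hne (if_neg hcw)
    have hGc : volume {t : ℝ | ¬ ∀ w : List (Fin M), t - wsum η w ∉ S} = 0 := by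
      have h1 : {t : ℝ | ¬ ∀ w : List (Fin M), t - wsum η w ∉ S}
          = {t : ℝ | ∃ w : List (Fin M), t - wsum η w ∈ S} := by
        ext t
        push_neg
        rfl
      rw [h1]
      exact hUnull S hSnull
    have hae : ∀ᵐ t ∂(volume : Measure ℝ), ∀ w : List (Fin M), t - wsum η w ∉ S := by
      rw [ae_iff]
      exact hGc
    filter_upwards [ae_restrict_of_ae hae, ae_restrict_mem measurableSet_Ici] with t h1 h2
    exact final t h1 h2
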